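/- Let G be a finite group, ρ : G → GL_N(ℂ) a representation by invertible N×N complex matrices, and M an N×N complex matrix with ρ(g)·M = M·ρ(g) for all g ∈ G. Let π be an irreducible complex representation of G of dimension D with character χ (χ(g) = tr π(g)), and set P = (D/|G|)·Σ_{g∈G} χ(g⁻¹)·ρ(g). Then P is idempotent (P² = P), M commutes with P and maps the range of P into itself, and there exists a monic polynomial p ∈ ℂ[X] such that the characteristic polynomial of the restriction of M to the range of P equals p^D. In particular every nonzero eigenvalue of P·M is D-fold degenerate. -/

import Mathlib

open CategoryTheory Matrix Polynomial Module


lemma IsoDeg.mulVecLin_smul {n : Type*} [Fintype n] {R : Type*} [CommRing R]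
    (c : R) (A : Matrix n n R) : (c • A).mulVecLin = c • A.mulVecLin := by
  ext v i
  simp [Matrix.smul_mulVec]

lemma IsoDeg.mulVecLin_sum {ι : Type*} (s : Finset ι) {n : Type*} [Fintype n] {R : Type*}
    [CommRing R] (A : ι → Matrix n n R) :
    (∑ i ∈ s, A i).mulVecLin = ∑ i ∈ s, (A i).mulVecLin := by
  classical
  induction s using Finset.induction with
  | empty => simp
  | insert a s h ih => simp [Finset.sum_insert h, ih]

lemma IsoDeg.charpoly_sub_smul_one {n : Type*} [DecidableEq n] [Fintype n] {R : Type*}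
    [CommRing R] (A : Matrix n n R) (μ : R) :
    (A - μ • 1).charpoly = A.charpoly.comp (X + C μ) := by
  let φ : R[X] →+* R[X] := eval₂RingHom C (X + C μ)
  have hdet : A.charpoly.comp (X + C μ) = ((Matrix.charmatrix A).map φ).det := by
    rw [Matrix.charpoly]
    show φ (Matrix.charmatrix A).det = _
    rw [RingHom.map_det]
    congr 1
  have hmap : (Matrix.charmatrix A).map (⇑φ) = Matrix.charmatrix (A - μ • 1) := by
    ext i j
    by_cases h : i = j
    · subst h
      simp [φ, Matrix.charmatrix_apply_eq, Matrix.sub_apply, Matrix.smul_apply,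
        Matrix.one_apply_eq]
      ring
    · simp [φ, Matrix.charmatrix_apply_ne _ _ _ h, Matrix.sub_apply, Matrix.smul_apply,
        Matrix.one_apply_ne h]
  rw [hdet, hmap, Matrix.charpoly]

lemma IsoDeg.end_charpoly_sub_smul_one {K M : Type*} [Field K] [AddCommGroup M] [Module K M]
    [FiniteDimensional K M] (f : Module.End K M) (μ : K) :
    (f - μ • 1).charpoly = f.charpoly.comp (X + C μ) := by
  let b := Module.Free.chooseBasis K M
  rw [← LinearMap.charpoly_toMatrix f b, ← LinearMap.charpoly_toMatrix (f - μ • 1) b]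
  rw [_root_.map_sub, _root_.map_smul]
  rw [show (LinearMap.toMatrix b b) 1 = 1 from ?_]
  · exact IsoDeg.charpoly_sub_smul_one _ μ
  · simp [LinearMap.toMatrix_one]

lemma IsoDeg.finrank_maxGenEigenspace_eq {K M : Type*} [Field K] [AddCommGroup M] [Module K M]
    [FiniteDimensional K M] (f : Module.End K M) (μ : K) :
    finrank K (Module.End.maxGenEigenspace f μ) = f.charpoly.rootMultiplicity μ := by
  have h1 : Module.End.maxGenEigenspace f μ = (f - μ • 1).maxGenEigenspace 0 := by
    ext x
    simp only [Module.End.mem_maxGenEigenspace, zero_smul, sub_zero]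
  rw [h1, LinearMap.finrank_maxGenEigenspace_zero_eq, IsoDeg.end_charpoly_sub_smul_one,
    ← rootMultiplicity_eq_natTrailingDegree]

lemma IsoDeg.exists_monic_pow {q : Polynomial ℂ} (hq : q.Monic) {D : ℕ}
    (h : ∀ μ : ℂ, D ∣ q.roots.count μ) : ∃ p : Polynomial ℂ, p.Monic ∧ q = p ^ D := by
  classical
  have hq0 : q = (q.roots.map fun a => X - C a).prod :=
    (IsAlgClosed.splits q).eq_prod_roots_of_monic hq
  rw [Finset.prod_multiset_map_count] at hq0
  refine ⟨∏ a ∈ q.roots.toFinset, (X - C a) ^ (q.roots.count a / D), ?_, ?_⟩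
  · exact monic_prod_of_monic _ _ fun a _ => (monic_X_sub_C a).pow _
  · conv_lhs => rw [hq0]
    rw [← Finset.prod_pow]
    exact Finset.prod_congr rfl fun a _ => by
      rw [← pow_mul, Nat.div_mul_cancel (h a)]

lemma IsoDeg.finrank_ne_zero (G : Type) [Group G] [Fintype G] (V : FDRep ℂ G) [Simple V] :
    finrank ℂ V ≠ 0 := by
  letI : Fintype ↑(GrpCat.of G) := ‹Fintype G›
  letI : Invertible ((Nat.card G : ℂ)) :=
    invertibleOfNonzero (Nat.cast_ne_zero.mpr Nat.card_pos.ne')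
  have horth := FDRep.char_orthonormal (k := ℂ) (G := G) V V
  rw [if_pos ⟨Iso.refl V⟩] at horth
  intro h
  haveI : Subsingleton V := Module.finrank_zero_iff.mp h
  have hzero : ∀ g : G, V.character g = 0 := by
    intro g
    unfold FDRep.character
    rw [Subsingleton.elim (V.ρ g) 0, _root_.map_zero]
  simp only [hzero, mul_zero, Finset.sum_const_zero, smul_zero] at horth
  exact zero_ne_one horth

lemma IsoDeg.conv_char (G : Type) [Group G] [Fintype G] (V : FDRep ℂ G) [Simple V] (k0 : G) :
    ∑ g : G, V.character g⁻¹ * V.character (g * k0)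
      = (Fintype.card G : ℂ) / (finrank ℂ V : ℂ) * V.character k0 := by
  classical
  have hn0 : ((Fintype.card G : ℂ)) ≠ 0 := Nat.cast_ne_zero.mpr Fintype.card_ne_zero
  have hD0 : ((finrank ℂ V : ℂ)) ≠ 0 := Nat.cast_ne_zero.mpr (IsoDeg.finrank_ne_zero G V)
  letI : Fintype ↑(GrpCat.of G) := ‹Fintype G›
  letI : Invertible ((Nat.card G : ℂ)) :=
    invertibleOfNonzero (Nat.cast_ne_zero.mpr Nat.card_pos.ne')
  have horth := FDRep.char_orthonormal (k := ℂ) (G := G) V V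
  rw [if_pos ⟨Iso.refl V⟩] at horth
  have horth' : ((Fintype.card G : ℂ))⁻¹ * ∑ g : G, V.character g * V.character g⁻¹ = 1 := by
    rw [Nat.card_eq_fintype_card] at horth
    exact horth
  have hsum : ∑ g : G, V.character g⁻¹ * V.character g = (Fintype.card G : ℂ) := by
    have h2 : ∑ g : G, V.character g * V.character g⁻¹ = (Fintype.card G : ℂ) := by
      rw [inv_mul_eq_div, div_eq_one_iff_eq hn0] at horth'
      exact horth'
    rw [← h2]
    exact Finset.sum_congr rfl fun g _ => mul_comm _ _
  -- the Schur operator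
  set T : V →ₗ[ℂ] V := ∑ g : G, V.character g⁻¹ • (V.ρ g : V →ₗ[ℂ] V) with hTdef
  have hT : T ∈ (Representation.linHom V.ρ V.ρ).invariants := by
    rw [Representation.mem_invariants]
    intro g
    show V.ρ g * (T * V.ρ g⁻¹) = T
    rw [hTdef, Finset.sum_mul, Finset.mul_sum]
    refine Fintype.sum_equiv (MulAut.conj g).toEquiv _ _ fun h => ?_
    show V.ρ g * (V.character h⁻¹ • V.ρ h * V.ρ g⁻¹)
        = V.character ((MulAut.conj g) h)⁻¹ • V.ρ ((MulAut.conj g) h)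
    rw [MulAut.conj_apply]
    have e2 : (g * h * g⁻¹)⁻¹ = g * h⁻¹ * g⁻¹ := by group
    rw [e2, FDRep.char_conj]
    simp [_root_.map_mul, mul_smul_comm, smul_mul_assoc, mul_assoc]
  have hrank : finrank ℂ ((Representation.linHom V.ρ V.ρ).invariants) = 1 := by
    have h1 : finrank ℂ ((Representation.linHom V.ρ V.ρ).invariants) = finrank ℂ (V ⟶ V) :=
      LinearEquiv.finrank_eq
        (Representation.linHom.invariantsEquivFDRepHom (k := ℂ) (G := G) V V)
    rw [h1, FDRep.finrank_hom_simple_simple]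
    exact if_pos ⟨Iso.refl V⟩
  have hid : (LinearMap.id : V →ₗ[ℂ] V) ∈ (Representation.linHom V.ρ V.ρ).invariants := by
    rw [Representation.mem_invariants]
    intro g
    show V.ρ g * (LinearMap.id * V.ρ g⁻¹) = LinearMap.id
    rw [← Module.End.one_eq_id, one_mul, ← _root_.map_mul, mul_inv_cancel, _root_.map_one]
  haveI : Nontrivial V :=
    Module.finrank_pos_iff.mp (Nat.pos_of_ne_zero (IsoDeg.finrank_ne_zero G V))
  have hidne : (⟨LinearMap.id, hid⟩ : (Representation.linHom V.ρ V.ρ).invariants) ≠ 0 := by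
    intro h
    obtain ⟨x, hx⟩ := exists_ne (0 : V)
    have h0 : (LinearMap.id : V →ₗ[ℂ] V) = 0 := by
      simpa [Subtype.ext_iff] using h
    have := LinearMap.congr_fun h0 x
    simp at this
    exact hx this
  obtain ⟨cc, hcc⟩ := (finrank_eq_one_iff_of_nonzero' _ hidne).mp hrank ⟨T, hT⟩
  have hTc : T = cc • (LinearMap.id : V →ₗ[ℂ] V) := by
    have h' := congrArg Subtype.val hcc
    simp only [SetLike.val_smul] at h'
    exact h'.symm
  have htrT : (LinearMap.trace ℂ V) T = ∑ g : G, V.character g⁻¹ * V.character g := by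
    rw [hTdef, _root_.map_sum]
    exact Finset.sum_congr rfl fun g _ => by
      rw [_root_.map_smul, smul_eq_mul]; rfl
  have htrT2 : (LinearMap.trace ℂ V) T = cc * (finrank ℂ V : ℂ) := by
    rw [hTc, _root_.map_smul, smul_eq_mul, LinearMap.trace_id]
  have hccD : cc * (finrank ℂ V : ℂ) = (Fintype.card G : ℂ) := by
    rw [← htrT2, htrT, hsum]
  have hcc2 : cc = (Fintype.card G : ℂ) / (finrank ℂ V : ℂ) :=
    (eq_div_iff hD0).mpr hccD
  -- now compute the convolution
  have hcomp : T * (V.ρ k0 : V →ₗ[ℂ] V) = ∑ g : G, V.character g⁻¹ • (V.ρ (g * k0) : V →ₗ[ℂ] V) := by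
    rw [hTdef, Finset.sum_mul]
    exact Finset.sum_congr rfl fun g _ => by
      rw [smul_mul_assoc, ← _root_.map_mul]
  have ht1 : (LinearMap.trace ℂ V) (T * (V.ρ k0 : V →ₗ[ℂ] V))
      = ∑ g : G, V.character g⁻¹ * V.character (g * k0) := by
    rw [hcomp, _root_.map_sum]
    exact Finset.sum_congr rfl fun g _ => by rw [_root_.map_smul, smul_eq_mul]; rfl
  have ht2 : (LinearMap.trace ℂ V) (T * (V.ρ k0 : V →ₗ[ℂ] V)) = cc * V.character k0 := by
    rw [hTc, smul_mul_assoc, ← Module.End.one_eq_id, one_mul, _root_.map_smul, smul_eq_mul]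
    rfl
  rw [← ht1, ht2, hcc2]

lemma IsoDeg.dvd_finrank (N : ℕ) (G : Type) [Group G] [Fintype G]
    (ρ : G →* Matrix (Fin N) (Fin N) ℂ) (V : FDRep ℂ G)
    (U : Submodule ℂ (Fin N → ℂ))
    (hr : ∀ g : G, ∀ x ∈ U, (ρ g).mulVecLin x ∈ U)
    (hid : ∀ x : U, (((finrank ℂ V : ℂ) / (Fintype.card G : ℂ)) •
        ∑ g : G, V.character g⁻¹ • (ρ g).mulVecLin) (x : Fin N → ℂ) = x) :
    finrank ℂ V ∣ finrank ℂ U := by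
  classical
  have hn0 : ((Fintype.card G : ℂ)) ≠ 0 := Nat.cast_ne_zero.mpr Fintype.card_ne_zero
  letI : Invertible ((Fintype.card G : ℂ)) := invertibleOfNonzero hn0
  let r : G → (U →ₗ[ℂ] U) := fun g => ((ρ g).mulVecLin).restrict (hr g)
  have hr1 : ∀ (g : G) (x : U), ((r g x : Fin N → ℂ)) = (ρ g).mulVecLin (x : Fin N → ℂ) :=
    fun g x => rfl
  let ρU : Representation ℂ G U :=
    { toFun := r
      map_one' := by
        refine LinearMap.ext fun x => Subtype.ext ?_
        rw [hr1]
        simp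
      map_mul' := fun g h => by
        refine LinearMap.ext fun x => Subtype.ext ?_
        rw [hr1, _root_.map_mul, Matrix.mulVecLin_mul]
        rfl }
  let UF : FDRep ℂ G := FDRep.of ρU
  have hchar : ∀ g : G, UF.character g = LinearMap.trace ℂ U (r g) := fun g => rfl
  have hidU : (((finrank ℂ V : ℂ) / (Fintype.card G : ℂ)) • ∑ g : G, V.character g⁻¹ • r g)
      = (LinearMap.id : U →ₗ[ℂ] U) := by
    refine LinearMap.ext fun x => Subtype.ext ?_
    have h1 : (((((finrank ℂ V : ℂ) / (Fintype.card G : ℂ)) •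
          ∑ g : G, V.character g⁻¹ • r g) x : U) : Fin N → ℂ)
        = (((finrank ℂ V : ℂ) / (Fintype.card G : ℂ)) •
            ∑ g : G, V.character g⁻¹ • (ρ g).mulVecLin) (x : Fin N → ℂ) := by
      simp only [LinearMap.smul_apply, LinearMap.sum_apply, SetLike.val_smul,
        AddSubmonoidClass.coe_finset_sum, r, LinearMap.restrict_coe_apply]
    rw [h1, hid x]
    rfl
  have htr : ((finrank ℂ U : ℂ))
      = ((finrank ℂ V : ℂ) / (Fintype.card G : ℂ)) *
          ∑ g : G, V.character g⁻¹ * UF.character g := by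
    simp only [hchar]
    have h2 := congrArg (LinearMap.trace ℂ U) hidU
    rw [LinearMap.trace_id] at h2
    rw [_root_.map_smul, _root_.map_sum] at h2
    simp only [_root_.map_smul, smul_eq_mul] at h2
    exact h2.symm
  have havg := FDRep.average_char_eq_finrank_invariants
    (FDRep.of (Representation.linHom V.ρ UF.ρ))
  simp_rw [FDRep.char_linHom] at havg
  refine ⟨finrank ℂ
    (Representation.invariants (FDRep.of (Representation.linHom V.ρ UF.ρ)).ρ), ?_⟩
  have key : ((finrank ℂ U : ℂ)) = ((finrank ℂ V : ℂ)) *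
      ((finrank ℂ (Representation.invariants
        (FDRep.of (Representation.linHom V.ρ UF.ρ)).ρ) : ℂ)) := by
    rw [htr, ← havg, Nat.card_eq_fintype_card, div_eq_mul_inv, mul_assoc]
  exact_mod_cast key

/-- **D-fold eigenvalue degeneracy on an isotypic component.**
Let `G` be a finite group, `ρ : G → GL_N(ℂ)` a matrix representation, and `M` an `N × N`
complex matrix commuting with every `ρ g`.  Let `V` be an irreducible (simple) complex
representation of `G` of dimension `D` with character `χ`, and
`P = (D/|G|) Σ_g χ(g⁻¹) ρ(g)` the corresponding isotypic projector.  Then `P² = P`,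
`M` commutes with `P` and preserves the range of `P`, and the characteristic polynomial
of the restriction of `M` to the range of `P` is a `D`-th power of a monic polynomial;
in particular every eigenvalue there is `D`-fold degenerate. -/
theorem isotypic_eigenvalue_degeneracy
    (N : ℕ) (G : Type) [Group G] [Fintype G]
    (ρ : G →* Matrix (Fin N) (Fin N) ℂ)
    (M : Matrix (Fin N) (Fin N) ℂ)
    (hM : ∀ g : G, ρ g * M = M * ρ g)
    (V : FDRep ℂ G) [Simple V]
    (P : Matrix (Fin N) (Fin N) ℂ)
    (hP : P = ((Module.finrank ℂ V : ℂ) / (Fintype.card G : ℂ)) •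
        ∑ g : G, V.character g⁻¹ • ρ g) :
    P * P = P ∧ M * P = P * M ∧
    ∃ (hinv : ∀ x ∈ LinearMap.range P.mulVecLin,
        M.mulVecLin x ∈ LinearMap.range P.mulVecLin)
      (p : Polynomial ℂ), p.Monic ∧
        LinearMap.charpoly (M.mulVecLin.restrict hinv) = p ^ (Module.finrank ℂ V) := by
  classical
  have hn0 : ((Fintype.card G : ℂ)) ≠ 0 := Nat.cast_ne_zero.mpr Fintype.card_ne_zero
  have hDnat : Module.finrank ℂ V ≠ 0 := IsoDeg.finrank_ne_zero G V
  have hD0 : ((Module.finrank ℂ V : ℂ)) ≠ 0 := Nat.cast_ne_zero.mpr hDnat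
  set χ := V.character with hχ
  set S : Matrix (Fin N) (Fin N) ℂ := ∑ g : G, χ g⁻¹ • ρ g with hS
  set c : ℂ := (Module.finrank ℂ V : ℂ) / (Fintype.card G : ℂ) with hc
  have hcancel : c * ((Fintype.card G : ℂ) / (Module.finrank ℂ V : ℂ)) = 1 := by
    rw [hc]; field_simp
  have hSS : S * S = ((Fintype.card G : ℂ) / (Module.finrank ℂ V : ℂ)) • S := by
    calc S * S = ∑ g : G, ∑ h : G, (χ g⁻¹ * χ h⁻¹) • ρ (g * h) := by
          rw [hS, Finset.sum_mul_sum]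
          refine Finset.sum_congr rfl fun g _ => Finset.sum_congr rfl fun h _ => ?_
          rw [_root_.map_mul, smul_mul_assoc, mul_smul_comm, smul_smul]
      _ = ∑ g : G, ∑ k : G, (χ g⁻¹ * χ (k⁻¹ * g)) • ρ k := by
          refine Finset.sum_congr rfl fun g _ => ?_
          refine Fintype.sum_equiv (Equiv.mulLeft g) _ _ fun h => ?_
          have e1 : (Equiv.mulLeft g) h = g * h := rfl
          have e2 : ((g * h)⁻¹ * g) = h⁻¹ := by group
          rw [e1, e2]
      _ = ∑ k : G, (∑ g : G, χ g⁻¹ * χ (g * k⁻¹)) • ρ k := by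
          rw [Finset.sum_comm]
          refine Finset.sum_congr rfl fun k _ => ?_
          rw [Finset.sum_smul]
          refine Finset.sum_congr rfl fun g _ => ?_
          rw [hχ, FDRep.char_mul_comm]
      _ = ∑ k : G, (((Fintype.card G : ℂ) / (Module.finrank ℂ V : ℂ)) * χ k⁻¹) • ρ k := by
          refine Finset.sum_congr rfl fun k _ => ?_
          rw [hχ, IsoDeg.conv_char G V k⁻¹]
      _ = ((Fintype.card G : ℂ) / (Module.finrank ℂ V : ℂ)) • S := by
          rw [hS, Finset.smul_sum]
          exact Finset.sum_congr rfl fun k _ => (smul_smul _ _ _).symm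
  have hPP : P * P = P := by
    rw [hP, smul_mul_assoc, mul_smul_comm, smul_smul, hSS, smul_smul, mul_assoc, hcancel,
      mul_one]
  have hgS : ∀ g : G, ρ g * S = S * ρ g := by
    intro g0
    have h1 : ρ g0 * S = ∑ k : G, χ (k⁻¹ * g0) • ρ k := by
      rw [hS, Finset.mul_sum]
      refine Fintype.sum_equiv (Equiv.mulLeft g0) _ _ fun h => ?_
      have e1 : (Equiv.mulLeft g0) h = g0 * h := rfl
      have e2 : ((g0 * h)⁻¹ * g0) = h⁻¹ := by group
      rw [e1, e2, mul_smul_comm, ← _root_.map_mul]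
    have h2 : S * ρ g0 = ∑ k : G, χ (g0 * k⁻¹) • ρ k := by
      rw [hS, Finset.sum_mul]
      refine Fintype.sum_equiv (Equiv.mulRight g0) _ _ fun h => ?_
      have e1 : (Equiv.mulRight g0) h = h * g0 := rfl
      have e2 : (g0 * (h * g0)⁻¹) = h⁻¹ := by group
      rw [e1, e2, smul_mul_assoc, ← _root_.map_mul]
    rw [h1, h2]
    refine Finset.sum_congr rfl fun k _ => ?_
    rw [hχ, FDRep.char_mul_comm]
  have hgP : ∀ g : G, ρ g * P = P * ρ g := by
    intro g
    rw [hP, mul_smul_comm, smul_mul_assoc, hgS g]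
  have hMP : M * P = P * M := by
    rw [hP, mul_smul_comm, smul_mul_assoc]
    congr 1
    rw [hS, Finset.mul_sum, Finset.sum_mul]
    refine Finset.sum_congr rfl fun g _ => ?_
    rw [mul_smul_comm, smul_mul_assoc, ← hM g]
  have hinv : ∀ x ∈ LinearMap.range P.mulVecLin,
      M.mulVecLin x ∈ LinearMap.range P.mulVecLin := by
    rintro x ⟨y, rfl⟩
    refine ⟨M.mulVecLin y, ?_⟩
    show P.mulVec (M.mulVec y) = M.mulVec (P.mulVec y)
    rw [Matrix.mulVec_mulVec, Matrix.mulVec_mulVec, hMP]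
  refine ⟨hPP, hMP, hinv, ?_⟩
  set W := LinearMap.range P.mulVecLin with hW
  set f := M.mulVecLin.restrict hinv with hf
  have hPW : ∀ x ∈ W, P.mulVecLin x = x := by
    rintro x ⟨y, rfl⟩
    show P.mulVec (P.mulVec y) = P.mulVec y
    rw [Matrix.mulVec_mulVec, hPP]
  have hρW : ∀ g : G, ∀ x ∈ W, (ρ g).mulVecLin x ∈ W := by
    rintro g x ⟨y, rfl⟩
    refine ⟨(ρ g).mulVecLin y, ?_⟩
    show P.mulVec ((ρ g).mulVec y) = (ρ g).mulVec (P.mulVec y)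
    rw [Matrix.mulVec_mulVec, Matrix.mulVec_mulVec, ← hgP g]
  let rW : G → (W →ₗ[ℂ] W) := fun g => ((ρ g).mulVecLin).restrict (hρW g)
  have hcomm : ∀ g : G, Commute f (rW g) := by
    intro g
    refine LinearMap.ext fun x => Subtype.ext ?_
    show M.mulVec ((ρ g).mulVec (x : Fin N → ℂ)) = (ρ g).mulVec (M.mulVec (x : Fin N → ℂ))
    rw [Matrix.mulVec_mulVec, Matrix.mulVec_mulVec, ← hM g]
  have hop : (((Module.finrank ℂ V : ℂ) / (Fintype.card G : ℂ)) •
      ∑ g : G, V.character g⁻¹ • (ρ g).mulVecLin) = P.mulVecLin := by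
    rw [hP, IsoDeg.mulVecLin_smul, IsoDeg.mulVecLin_sum]
    rw [← hc, ← hχ]
    congr 1
    exact Finset.sum_congr rfl fun g _ => (IsoDeg.mulVecLin_smul _ _).symm
  have hdvd : ∀ μ : ℂ, Module.finrank ℂ V ∣ (LinearMap.charpoly f).roots.count μ := by
    intro μ
    rw [Polynomial.count_roots, ← IsoDeg.finrank_maxGenEigenspace_eq]
    have hmap : ∀ g : G, Set.MapsTo (rW g) (Module.End.maxGenEigenspace f μ) (Module.End.maxGenEigenspace f μ) :=
      fun g => Module.End.mapsTo_maxGenEigenspace_of_comm (hcomm g) μ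
    rw [← Submodule.finrank_map_subtype_eq W (Module.End.maxGenEigenspace f μ)]
    refine IsoDeg.dvd_finrank N G ρ V ((Module.End.maxGenEigenspace f μ).map W.subtype) ?_ ?_
    · intro g x hx
      obtain ⟨e, he, rfl⟩ := Submodule.mem_map.mp hx
      exact Submodule.mem_map.mpr ⟨rW g e, hmap g he, rfl⟩
    · intro x
      have hxW : (x : Fin N → ℂ) ∈ W := by
        obtain ⟨e, _, hx⟩ := Submodule.mem_map.mp x.2
        rw [← hx]
        exact e.2
      rw [hop]
      exact hPW _ hxW
  obtain ⟨p, hpm, hpq⟩ := IsoDeg.exists_monic_pow (LinearMap.charpoly_monic f) hdvd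
  exact ⟨p, hpm, hpq⟩
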